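/- arXiv:1310.2506 — 2 statements merged into one kernel-verified Lean document; each statement's English description precedes it below -/
import Mathlib

section
/- Let y = (y_1,…,y_n) ∈ ℝ^n be an isotropic random vector with unconditional distribution and finite fourth moments, such that E[y_j² y_k²] = a_{2,2} for all j ≠ k and E[y_j^4] = 3a_{2,2} + κ_4 for all j. Then for every n×n complex symmetric matrix A, Var((A y, y)) = (a_{2,2} − n^{-2}) |Tr A|² + 2 a_{2,2} Tr(A A^*) + κ_4 Σ_{j=1}^n |A_{jj}|², where (Ay,y) = Σ_{j,k} A_{jk} y_j y_k and Var(X) := E[|X − E X|²]. -/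
open MeasureTheory ProbabilityTheory Filter Topology Matrix Asymptotics
open scoped BigOperators ENNReal NNReal Pointwise

noncomputable section

/-- The (bilinear) quadratic form `(A y, y) = ∑_{j,k} A_{jk} y_j y_k` of a complex
matrix evaluated on a real vector. -/
def quadForm {n : ℕ} (A : Matrix (Fin n) (Fin n) ℂ) (y : Fin n → ℝ) : ℂ :=
  ∑ j, ∑ k, A j k * (y j : ℂ) * (y k : ℂ)

/-- Operator (ℓ² → ℓ²) norm of a complex matrix. -/
def opNorm {n : ℕ} (A : Matrix (Fin n) (Fin n) ℂ) : ℝ :=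
  ‖Matrix.toEuclideanCLM (𝕜 := ℂ) A‖

/-- A random vector is isotropic: centered with covariance `n⁻¹ I`. -/
def Isotropic {Ω : Type} [MeasurableSpace Ω] (P : Measure Ω) {n : ℕ}
    (y : Ω → Fin n → ℝ) : Prop :=
  (∀ j, ∫ ω, y ω j ∂P = 0) ∧
  ∀ j k, ∫ ω, y ω j * y ω k ∂P = if j = k then (n : ℝ)⁻¹ else 0

/-- The distribution of a random vector is unconditional: invariant under sign flips of
coordinates. -/
def Unconditional {Ω : Type} [MeasurableSpace Ω] (P : Measure Ω) {n : ℕ}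
    (y : Ω → Fin n → ℝ) : Prop :=
  ∀ ε : Fin n → ℝ, (∀ j, ε j = 1 ∨ ε j = -1) →
    Measure.map (fun ω => fun j => ε j * y ω j) P = Measure.map y P

/-- The resolvent `G(z) = (M - z I)⁻¹` (as a complex matrix) of a real matrix. -/
def resolventM {n : ℕ} (M : Matrix (Fin n) (Fin n) ℝ) (z : ℂ) : Matrix (Fin n) (Fin n) ℂ :=
  (M.map (fun x => (x : ℂ)) - z • (1 : Matrix (Fin n) (Fin n) ℂ))⁻¹

/-- The random matrix `M = ∑_α τ_α y_α ⊗ y_α`. -/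
def sampleMatrix {n m : ℕ} (τ : Fin m → ℝ) (y : Fin m → Fin n → ℝ) :
    Matrix (Fin n) (Fin n) ℝ :=
  ∑ α, τ α • Matrix.vecMulVec (y α) (y α)

/-- Linear eigenvalue statistic `∑_j φ(λ_j)` of a (symmetric) real matrix. -/
def eigsStat {n : ℕ} (M : Matrix (Fin n) (Fin n) ℝ) (φ : ℝ → ℝ) : ℝ :=
  if h : M.IsHermitian then ∑ j, φ (h.eigenvalues j) else 0

/-- Normalized counting measure of eigenvalues of a (symmetric) real matrix evaluated
on a set. -/
def eigNCM {n : ℕ} (M : Matrix (Fin n) (Fin n) ℝ) (Δ : Set ℝ) : ℝ :=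
  if h : M.IsHermitian then (∑ j, Δ.indicator (fun _ => (1 : ℝ)) (h.eigenvalues j)) / n
  else 0

/-- Variance of a real random variable. -/
def rVar {Ω : Type} [MeasurableSpace Ω] (P : Measure Ω) (X : Ω → ℝ) : ℝ :=
  ∫ ω, (X ω - ∫ ω', X ω' ∂P) ^ 2 ∂P

/-- Variance `E |X - E X|²` of a complex random variable. -/
def cVar {Ω : Type} [MeasurableSpace Ω] (P : Measure Ω) (X : Ω → ℂ) : ℝ :=
  ∫ ω, ‖X ω - ∫ ω', X ω' ∂P‖ ^ 2 ∂P

/-- The Fourier transform `φ̂(k) = ∫ e^{ikx} φ(x) dx`. -/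
def fhat (φ : ℝ → ℝ) (k : ℝ) : ℂ := ∫ x : ℝ, Complex.exp (Complex.I * k * x) * φ x

/-- The squared norm `‖φ‖_s² = ∫ (1+2|k|)^{2s} |φ̂(k)|² dk` (with value in `ℝ≥0∞`). -/
def sobNormSq (s : ℝ) (φ : ℝ → ℝ) : ℝ≥0∞ :=
  ∫⁻ k : ℝ, ENNReal.ofReal ((1 + 2 * |k|) ^ (2 * s) * ‖fhat φ k‖ ^ 2)


open scoped ComplexConjugate
set_option linter.unusedSectionVars false
set_option maxHeartbeats 1000000

section Helpers

variable {Ω : Type} [MeasurableSpace Ω] (P : Measure Ω) [IsProbabilityMeasure P]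
  {n : ℕ} (y : Ω → Fin n → ℝ)

lemma my_abs4 (a b c d : ℝ) : |a*b*c*d| ≤ (a^4+b^4+c^4+d^4)/4 := by
  have h1 : |a*b*c*d| ≤ ((a*b)^2 + (c*d)^2)/2 := by
    rw [show a*b*c*d = (a*b)*(c*d) by ring, abs_le]
    constructor <;> nlinarith [sq_nonneg (a*b+c*d), sq_nonneg (a*b-c*d)]
  nlinarith [sq_nonneg (a^2-b^2), sq_nonneg (c^2-d^2)]

lemma my_meas (hmeas : Measurable y) (j : Fin n) : Measurable (fun ω => y ω j) :=
  (measurable_pi_apply j).comp hmeas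

lemma my_int4 (hmeas : Measurable y) (hint : ∀ j, Integrable (fun ω => (y ω j) ^ 4) P)
    (j k l m : Fin n) : Integrable (fun ω => y ω j * y ω k * y ω l * y ω m) P := by
  refine Integrable.mono'
    ((((hint j).add (hint k)).add ((hint l).add (hint m))).div_const 4)
    ((((my_meas y hmeas j).mul (my_meas y hmeas k)).mul (my_meas y hmeas l)).mul
      (my_meas y hmeas m)).aestronglyMeasurable
    (Filter.Eventually.of_forall fun ω => ?_)
  calc |y ω j * y ω k * y ω l * y ω m|
      ≤ ((y ω j)^4 + (y ω k)^4 + (y ω l)^4 + (y ω m)^4)/4 := my_abs4 _ _ _ _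
    _ = ((y ω j)^4 + (y ω k)^4 + ((y ω l)^4 + (y ω m)^4))/4 := by ring

lemma my_int2 (hmeas : Measurable y) (hint : ∀ j, Integrable (fun ω => (y ω j) ^ 4) P)
    (j k : Fin n) : Integrable (fun ω => y ω j * y ω k) P := by
  have h2 : ∀ i : Fin n, Integrable (fun ω => (y ω i)^2) P := by
    intro i
    refine Integrable.mono' ((integrable_const (1:ℝ)).add (hint i))
      ((my_meas y hmeas i).pow_const 2).aestronglyMeasurable
      (Filter.Eventually.of_forall fun ω => ?_)
    simp only [Pi.add_apply, Real.norm_eq_abs]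
    rw [abs_of_nonneg (sq_nonneg _)]
    nlinarith [sq_nonneg ((y ω i)^2 - 1)]
  refine Integrable.mono' (((h2 j).add (h2 k)).div_const 2)
    ((my_meas y hmeas j).mul (my_meas y hmeas k)).aestronglyMeasurable
    (Filter.Eventually.of_forall fun ω => ?_)
  simp only [Pi.add_apply, Real.norm_eq_abs]
  rw [abs_le]
  constructor <;> nlinarith [sq_nonneg (y ω j + y ω k), sq_nonneg (y ω j - y ω k)]

lemma my_flip (hmeas : Measurable y) (huncond : Unconditional P y)
    (j k l m i0 : Fin n)
    (hs : ((if j = i0 then (-1:ℝ) else 1) * (if k = i0 then (-1:ℝ) else 1) *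
      (if l = i0 then (-1:ℝ) else 1) * (if m = i0 then (-1:ℝ) else 1)) = -1) :
    ∫ ω, y ω j * y ω k * y ω l * y ω m ∂P = 0 := by
  set ε : Fin n → ℝ := fun p => if p = i0 then (-1:ℝ) else 1 with hε_def
  have hε : ∀ p, ε p = 1 ∨ ε p = -1 := by
    intro p; by_cases h : p = i0 <;> simp [ε, h]
  have hmap := huncond ε hε
  set g : (Fin n → ℝ) → ℝ := fun x => x j * x k * x l * x m with hg_def
  have hg : Continuous g :=
    (((continuous_apply j).mul (continuous_apply k)).mul (continuous_apply l)).mul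
      (continuous_apply m)
  have hmeas2 : Measurable (fun ω => fun p => ε p * y ω p) :=
    measurable_pi_lambda _ fun p => measurable_const.mul ((measurable_pi_apply p).comp hmeas)
  have key : ∫ ω, g (y ω) ∂P = ∫ ω, g (fun p => ε p * y ω p) ∂P := by
    rw [← integral_map hmeas.aemeasurable hg.aestronglyMeasurable, ← hmap,
      integral_map hmeas2.aemeasurable hg.aestronglyMeasurable]
  have hpt : ∀ ω, g (fun p => ε p * y ω p) = - g (y ω) := by
    intro ω
    simp only [g, ε]
    calc (if j = i0 then (-1:ℝ) else 1) * y ω j * ((if k = i0 then (-1:ℝ) else 1) * y ω k) *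
          ((if l = i0 then (-1:ℝ) else 1) * y ω l) * ((if m = i0 then (-1:ℝ) else 1) * y ω m)
        = ((if j = i0 then (-1:ℝ) else 1) * (if k = i0 then (-1:ℝ) else 1) *
          (if l = i0 then (-1:ℝ) else 1) * (if m = i0 then (-1:ℝ) else 1)) *
          (y ω j * y ω k * y ω l * y ω m) := by ring
      _ = - (y ω j * y ω k * y ω l * y ω m) := by rw [hs]; ring
  have key2 : ∫ ω, g (fun p => ε p * y ω p) ∂P = - ∫ ω, g (y ω) ∂P := by
    simp only [hpt]; rw [integral_neg]
  have h0 : ∫ ω, g (y ω) ∂P = 0 := by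
    have := key.trans key2; linarith
  simpa [g] using h0

lemma my_S4 (hmeas : Measurable y) (huncond : Unconditional P y) {a22 κ4 : ℝ}
    (ha22 : ∀ j k : Fin n, j ≠ k → ∫ ω, (y ω j) ^ 2 * (y ω k) ^ 2 ∂P = a22)
    (hκ4 : ∀ j : Fin n, ∫ ω, (y ω j) ^ 4 ∂P = 3 * a22 + κ4)
    (j k l m : Fin n) :
    ∫ ω, y ω j * y ω k * y ω l * y ω m ∂P =
      a22 * ((if j = k then (1:ℝ) else 0) * (if l = m then (1:ℝ) else 0)
        + (if j = l then (1:ℝ) else 0) * (if k = m then (1:ℝ) else 0)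
        + (if j = m then (1:ℝ) else 0) * (if k = l then (1:ℝ) else 0))
      + κ4 * ((if j = k then (1:ℝ) else 0) * (if k = l then (1:ℝ) else 0) *
          (if l = m then (1:ℝ) else 0)) := by
  by_cases h1 : j = k ∧ l = m
  · obtain ⟨hjk, hlm⟩ := h1
    subst hjk; subst hlm
    by_cases hjl : j = l
    · subst hjl
      rw [show (∫ ω, y ω j * y ω j * y ω j * y ω j ∂P) = ∫ ω, (y ω j)^4 ∂P from
        integral_congr_ae (Filter.Eventually.of_forall fun ω => by ring), hκ4 j]
      simp; ring
    · rw [show (∫ ω, y ω j * y ω j * y ω l * y ω l ∂P) = ∫ ω, (y ω j)^2 * (y ω l)^2 ∂P from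
        integral_congr_ae (Filter.Eventually.of_forall fun ω => by ring), ha22 j l hjl]
      simp [hjl]
  by_cases h2 : j = l ∧ k = m
  · obtain ⟨hjl, hkm⟩ := h2
    subst hjl; subst hkm
    have hjk : j ≠ k := fun h => h1 ⟨h, h⟩
    rw [show (∫ ω, y ω j * y ω k * y ω j * y ω k ∂P) = ∫ ω, (y ω j)^2 * (y ω k)^2 ∂P from
      integral_congr_ae (Filter.Eventually.of_forall fun ω => by ring), ha22 j k hjk]
    simp [hjk]
  by_cases h3 : j = m ∧ k = l
  · obtain ⟨hjm, hkl⟩ := h3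
    subst hjm; subst hkl
    have hjk : j ≠ k := fun h => h2 ⟨h, h.symm⟩
    rw [show (∫ ω, y ω j * y ω k * y ω k * y ω j ∂P) = ∫ ω, (y ω j)^2 * (y ω k)^2 ∂P from
      integral_congr_ae (Filter.Eventually.of_forall fun ω => by ring), ha22 j k hjk]
    simp [hjk, Ne.symm hjk]
  -- no pairing: both sides vanish
  by_cases hjk : j = k
  · subst hjk
    have hlm : l ≠ m := fun h => h1 ⟨rfl, h⟩
    rw [my_flip P y hmeas huncond j j l m m (by
      by_cases hjm : j = m <;> simp [hjm, hlm])]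
    by_cases hjl : j = l <;> by_cases hjm : j = m
    · exact absurd (hjl.symm.trans hjm) hlm
    · simp [hjl, hjm, hlm]
    · have hml : ¬ m = l := fun h => hjl (hjm.trans h)
      simp [hjl, hjm, hlm, hml]
    · simp [hjl, hjm, hlm]
  · by_cases hlm : l = m
    · subst hlm
      rw [my_flip P y hmeas huncond j k l l j (by
        by_cases hlj : l = j <;> simp [hlj, Ne.symm hjk])]
      by_cases hjl : j = l <;> by_cases hkl : k = l
      · exact absurd (hjl.trans hkl.symm) hjk
      · have hlk : ¬ l = k := fun h => hjk (hjl.trans h)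
        simp [hjk, hjl, hkl, hlk]
      all_goals simp [hjk, hjl, hkl]
    · by_cases hjl : j = l
      · subst hjl
        have hkm : k ≠ m := fun h => h2 ⟨rfl, h⟩
        rw [my_flip P y hmeas huncond j k j m k (by
          simp [Ne.symm hjk, hjk, hkm, Ne.symm hkm])]
        simp [hjk, hkm, hlm]
      · by_cases hjm : j = m
        · subst hjm
          have hkl : k ≠ l := fun h => h3 ⟨rfl, h⟩
          rw [my_flip P y hmeas huncond j k l j k (by
            simp [Ne.symm hjk, Ne.symm hkl, hjk])]
          simp [hjk, hjl, hkl]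
        · rw [my_flip P y hmeas huncond j k l m j (by
            simp [Ne.symm hjk, Ne.symm hjl, Ne.symm hjm])]
          simp [hjk, hjl, hjm]

end Helpers

lemma my_sum4 {n : ℕ} (A : Matrix (Fin n) (Fin n) ℂ) (hA : Aᵀ = A) (a22 κ4 : ℝ) :
    ∑ j, ∑ k, ∑ l, ∑ m, A j k * conj (A l m) *
      (((a22 * ((if j = k then (1:ℝ) else 0) * (if l = m then (1:ℝ) else 0)
          + (if j = l then (1:ℝ) else 0) * (if k = m then (1:ℝ) else 0)
          + (if j = m then (1:ℝ) else 0) * (if k = l then (1:ℝ) else 0))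
        + κ4 * ((if j = k then (1:ℝ) else 0) * (if k = l then (1:ℝ) else 0) *
            (if l = m then (1:ℝ) else 0))) : ℝ) : ℂ)
    = (a22:ℂ) * (A.trace * conj A.trace)
      + 2 * (a22:ℂ) * ∑ j, ∑ k, A j k * conj (A j k)
      + (κ4:ℂ) * ∑ j, A j j * conj (A j j) := by
  have step1 : ∀ j k l m : Fin n, A j k * conj (A l m) *
      (((a22 * ((if j = k then (1:ℝ) else 0) * (if l = m then (1:ℝ) else 0)
          + (if j = l then (1:ℝ) else 0) * (if k = m then (1:ℝ) else 0)
          + (if j = m then (1:ℝ) else 0) * (if k = l then (1:ℝ) else 0))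
        + κ4 * ((if j = k then (1:ℝ) else 0) * (if k = l then (1:ℝ) else 0) *
            (if l = m then (1:ℝ) else 0))) : ℝ) : ℂ)
      = (if j = k then (if l = m then (a22:ℂ) * (A j k * conj (A l m)) else 0) else 0)
        + (if j = l then (if k = m then (a22:ℂ) * (A j k * conj (A l m)) else 0) else 0)
        + (if j = m then (if k = l then (a22:ℂ) * (A j k * conj (A l m)) else 0) else 0)
        + (if j = k then (if k = l then (if l = m then (κ4:ℂ) * (A j k * conj (A l m))
            else 0) else 0) else 0) := by
    intro j k l m
    by_cases h1 : j = k <;> by_cases h2 : l = m <;> by_cases h3 : j = l <;>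
      by_cases h4 : k = m <;> by_cases h5 : j = m <;> by_cases h6 : k = l <;>
      (try simp [h1, h2, h3, h4, h5, h6]) <;> (try push_cast) <;> (try ring) <;> (try simp [Ne.symm h2]) <;> (try simp_all)
  have hsym : ∀ p q, A p q = A q p := by
    intro p q
    conv_lhs => rw [← hA]
    rfl
  have e1 : ∑ j : Fin n, ∑ k : Fin n, ∑ l : Fin n, ∑ m : Fin n,
      (if j = k then (if l = m then (a22:ℂ) * (A j k * conj (A l m)) else 0) else 0)
      = (a22:ℂ) * (A.trace * conj A.trace) := by
    simp [Finset.sum_ite_eq, Matrix.trace, Matrix.diag, map_sum, Finset.mul_sum,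
      Finset.sum_mul]
    exact Finset.sum_comm
  have e2 : ∑ j : Fin n, ∑ k : Fin n, ∑ l : Fin n, ∑ m : Fin n,
      (if j = l then (if k = m then (a22:ℂ) * (A j k * conj (A l m)) else 0) else 0)
      = (a22:ℂ) * ∑ j, ∑ k, A j k * conj (A j k) := by
    simp [Finset.sum_ite_eq, Finset.mul_sum]
  have e3 : ∑ j : Fin n, ∑ k : Fin n, ∑ l : Fin n, ∑ m : Fin n,
      (if j = m then (if k = l then (a22:ℂ) * (A j k * conj (A l m)) else 0) else 0)
      = (a22:ℂ) * ∑ j, ∑ k, A j k * conj (A j k) := by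
    have : ∀ j k : Fin n, A j k * conj (A k j) = A j k * conj (A j k) := by
      intro j k; rw [hsym k j]
    simp [Finset.sum_ite_eq, Finset.mul_sum, this]
  have e4 : ∑ j : Fin n, ∑ k : Fin n, ∑ l : Fin n, ∑ m : Fin n,
      (if j = k then (if k = l then (if l = m then (κ4:ℂ) * (A j k * conj (A l m))
        else 0) else 0) else 0)
      = (κ4:ℂ) * ∑ j, A j j * conj (A j j) := by
    simp [Finset.sum_ite_eq, Finset.mul_sum]
  simp only [step1, Finset.sum_add_distrib]
  rw [e1, e2, e3, e4]
  ring

lemma my_integral_re {Ω : Type} [MeasurableSpace Ω] {P : Measure Ω} {f : Ω → ℂ}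
    (hf : Integrable f P) : ∫ ω, (f ω).re ∂P = (∫ ω, f ω ∂P).re := integral_re hf

lemma my_intR {Ω : Type} [MeasurableSpace Ω] (P : Measure Ω) (f : Ω → ℝ) :
    ∫ ω, ((f ω : ℝ) : ℂ) ∂P = ((∫ ω, f ω ∂P : ℝ) : ℂ) := integral_ofReal

/-- variance of a quadratic form of an isotropic unconditional vector. -/
theorem variance_quadratic_form {Ω : Type} [MeasurableSpace Ω] (P : Measure Ω)
    [IsProbabilityMeasure P] {n : ℕ} (y : Ω → Fin n → ℝ)
    (hmeas : Measurable y)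
    (hint : ∀ j, Integrable (fun ω => (y ω j) ^ 4) P)
    (hiso : Isotropic P y)
    (huncond : Unconditional P y)
    (a22 κ4 : ℝ)
    (ha22 : ∀ j k : Fin n, j ≠ k → ∫ ω, (y ω j) ^ 2 * (y ω k) ^ 2 ∂P = a22)
    (hκ4 : ∀ j : Fin n, ∫ ω, (y ω j) ^ 4 ∂P = 3 * a22 + κ4)
    (A : Matrix (Fin n) (Fin n) ℂ) (hA : Aᵀ = A) :
    cVar P (fun ω => quadForm A (y ω)) =
      (a22 - ((n : ℝ)⁻¹) ^ 2) * ‖A.trace‖ ^ 2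
        + 2 * a22 * ((A * A.conjTranspose).trace).re
        + κ4 * ∑ j, ‖A j j‖ ^ 2 := by
  obtain ⟨hmean, hcov⟩ := hiso
  set X : Ω → ℂ := fun ω => quadForm A (y ω) with hX
  have hterm : ∀ (j k : Fin n), (fun ω => A j k * ((y ω j : ℝ) : ℂ) * ((y ω k : ℝ):ℂ))
      = fun ω => A j k * (((y ω j * y ω k : ℝ)) : ℂ) := by
    intro j k; funext ω; push_cast; ring
  have hXint : Integrable X P := by
    simp only [hX, quadForm]
    apply integrable_finset_sum; intro j _
    apply integrable_finset_sum; intro k _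
    rw [hterm j k]
    exact (my_int2 P y hmeas hint j k).ofReal.const_mul _
  have hint_jk : ∀ j k : Fin n,
      Integrable (fun ω => A j k * ((y ω j :ℝ):ℂ) * ((y ω k :ℝ):ℂ)) P := fun j k => by
    rw [hterm j k]; exact (my_int2 P y hmeas hint j k).ofReal.const_mul _
  have hEX : ∫ ω, X ω ∂P = (((n:ℝ)⁻¹ : ℝ) : ℂ) * A.trace := by
    simp only [hX, quadForm]
    rw [integral_finset_sum _ (fun j _ => integrable_finset_sum _ (fun k _ => hint_jk j k))]
    have key : ∀ j : Fin n, (∫ ω, ∑ k, A j k * ((y ω j:ℝ):ℂ) * ((y ω k:ℝ):ℂ) ∂P)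
        = (((n:ℝ)⁻¹ : ℝ):ℂ) * A j j := by
      intro j
      rw [integral_finset_sum _ (fun k _ => hint_jk j k)]
      have e : ∀ k : Fin n, (∫ ω, A j k * ((y ω j :ℝ):ℂ) * ((y ω k :ℝ):ℂ) ∂P)
          = A j k * (((if j = k then (n:ℝ)⁻¹ else 0 : ℝ)) : ℂ) := by
        intro k
        rw [hterm j k, integral_const_mul, my_intR P (fun ω => y ω j * y ω k), hcov j k]
      simp only [e, apply_ite Complex.ofReal, Complex.ofReal_zero, mul_ite, mul_zero]
      simp [Finset.sum_ite_eq]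
      ring
    simp only [key]
    simp [Matrix.trace, Matrix.diag, Finset.mul_sum]
  have hZpt : ∀ ω, X ω * conj (X ω) = ∑ j, ∑ k, ∑ l, ∑ m,
      A j k * conj (A l m) * (((y ω j * y ω k * y ω l * y ω m : ℝ)) : ℂ) := by
    intro ω
    rw [mul_comm]
    simp only [hX, quadForm, map_sum, _root_.map_mul, Finset.sum_mul, Finset.mul_sum]
    refine Finset.sum_congr rfl fun j _ => Finset.sum_congr rfl fun k _ =>
      Finset.sum_congr rfl fun l _ => Finset.sum_congr rfl fun m _ => ?_
    push_cast [Complex.conj_ofReal]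
    ring
  have hint_t : ∀ j k l m : Fin n, Integrable (fun ω =>
      A j k * conj (A l m) * (((y ω j * y ω k * y ω l * y ω m : ℝ)) : ℂ)) P :=
    fun j k l m => (my_int4 P y hmeas hint j k l m).ofReal.const_mul (A j k * conj (A l m))
  have hZint : Integrable (fun ω => X ω * conj (X ω)) P := by
    rw [show (fun ω => X ω * conj (X ω)) = fun ω => ∑ j, ∑ k, ∑ l, ∑ m,
      A j k * conj (A l m) * (((y ω j * y ω k * y ω l * y ω m : ℝ)) : ℂ) from funext hZpt]
    apply integrable_finset_sum; intro j _
    apply integrable_finset_sum; intro k _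
    apply integrable_finset_sum; intro l _
    apply integrable_finset_sum; intro m _
    exact hint_t j k l m
  have hZval : ∫ ω, X ω * conj (X ω) ∂P
      = (a22:ℂ) * (A.trace * conj A.trace)
        + 2 * (a22:ℂ) * ∑ j, ∑ k, A j k * conj (A j k)
        + (κ4:ℂ) * ∑ j, A j j * conj (A j j) := by
    rw [show (fun ω => X ω * conj (X ω)) = fun ω => ∑ j, ∑ k, ∑ l, ∑ m,
      A j k * conj (A l m) * (((y ω j * y ω k * y ω l * y ω m : ℝ)) : ℂ) from funext hZpt]
    rw [integral_finset_sum _ (fun j _ => integrable_finset_sum _ (fun k _ =>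
      integrable_finset_sum _ (fun l _ => integrable_finset_sum _ (fun m _ =>
      hint_t j k l m))))]
    rw [← my_sum4 A hA a22 κ4]
    refine Finset.sum_congr rfl fun j _ => ?_
    rw [integral_finset_sum _ (fun k _ => integrable_finset_sum _ (fun l _ =>
      integrable_finset_sum _ (fun m _ => hint_t j k l m)))]
    refine Finset.sum_congr rfl fun k _ => ?_
    rw [integral_finset_sum _ (fun l _ => integrable_finset_sum _ (fun m _ =>
      hint_t j k l m))]
    refine Finset.sum_congr rfl fun l _ => ?_
    rw [integral_finset_sum _ (fun m _ => hint_t j k l m)]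
    refine Finset.sum_congr rfl fun m _ => ?_
    rw [integral_const_mul, my_intR P (fun ω => y ω j * y ω k * y ω l * y ω m),
      my_S4 P y hmeas huncond ha22 hκ4 j k l m]
  have hvar : cVar P X = (∫ ω, X ω * conj (X ω) ∂P).re
      - Complex.normSq (∫ ω, X ω ∂P) := by
    set c : ℂ := ∫ ω, X ω ∂P with hc
    have hpt : ∀ ω, ‖X ω - c‖ ^ 2 = (X ω * conj (X ω)).re
        + (Complex.normSq c - 2 * (X ω * conj c).re) := by
      intro ω
      rw [Complex.sq_norm, Complex.normSq_sub]
      rw [show X ω * conj (X ω) = ((Complex.normSq (X ω) : ℝ) : ℂ) from Complex.mul_conj _]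
      rw [Complex.ofReal_re]
      ring
    have h1 : Integrable (fun ω => (X ω * conj (X ω)).re) P := hZint.re
    have h2b : Integrable (fun ω => 2 * (X ω * conj c).re) P :=
      ((hXint.mul_const (conj c)).re).const_mul 2
    have h2 : Integrable (fun ω => Complex.normSq c - 2 * (X ω * conj c).re) P :=
      (integrable_const _).sub h2b
    calc cVar P X = ∫ ω, ((X ω * conj (X ω)).re
          + (Complex.normSq c - 2 * (X ω * conj c).re)) ∂P := by
            simp only [cVar, ← hc, hpt]
      _ = (∫ ω, (X ω * conj (X ω)).re ∂P)
          + ∫ ω, (Complex.normSq c - 2 * (X ω * conj c).re) ∂P := integral_add h1 h2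
      _ = (∫ ω, X ω * conj (X ω) ∂P).re + (Complex.normSq c - 2 * Complex.normSq c) := by
            rw [my_integral_re hZint]
            congr 1
            rw [integral_sub (integrable_const _) h2b]
            rw [integral_const]
            simp only [probReal_univ, ENNReal.toReal_one, one_smul]
            congr 1
            rw [integral_const_mul, my_integral_re (hXint.mul_const (conj c)),
              integral_mul_const, ← hc, Complex.mul_conj, Complex.ofReal_re]
      _ = (∫ ω, X ω * conj (X ω) ∂P).re - Complex.normSq c := by ring
  -- now put everything together
  rw [hvar, hZval, hEX]
  have htr : (A * A.conjTranspose).trace = ∑ j, ∑ k, A j k * conj (A j k) := by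
    simp [Matrix.trace, Matrix.diag, Matrix.mul_apply, Matrix.conjTranspose_apply]
  rw [htr]
  have hre1 : ((a22:ℂ) * (A.trace * conj A.trace)).re = a22 * ‖A.trace‖ ^ 2 := by
    rw [Complex.mul_conj, ← Complex.ofReal_mul, Complex.ofReal_re, Complex.normSq_eq_norm_sq]
  have hre2 : (2 * (a22:ℂ) * ∑ j, ∑ k, A j k * conj (A j k)).re
      = 2 * a22 * (∑ j, ∑ k, A j k * conj (A j k)).re := by
    rw [show (2 * (a22:ℂ)) = ((2 * a22 : ℝ) : ℂ) by push_cast; ring, Complex.re_ofReal_mul]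
    try ring
  have hre3 : ((κ4:ℂ) * ∑ j, A j j * conj (A j j)).re = κ4 * ∑ j, ‖A j j‖ ^ 2 := by
    rw [Complex.re_ofReal_mul]
    congr 1
    rw [show (∑ j, A j j * conj (A j j)) = (((∑ j, ‖A j j‖ ^ 2 : ℝ)) : ℂ) by
      push_cast
      refine Finset.sum_congr rfl fun j _ => ?_
      rw [Complex.mul_conj, Complex.normSq_eq_norm_sq]
      push_cast; ring]
    rw [Complex.ofReal_re]
  have hnsq : Complex.normSq ((((n:ℝ)⁻¹ : ℝ) : ℂ) * A.trace)
      = ((n:ℝ)⁻¹) ^ 2 * ‖A.trace‖ ^ 2 := by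
    rw [Complex.normSq_mul, Complex.normSq_ofReal, Complex.normSq_eq_norm_sq]
    ring
  rw [Complex.add_re, Complex.add_re, hre1, hre2, hre3, hnsq]
  ring
end
end

section
/- Let M⁰ be an n×n real symmetric matrix, y ∈ ℝ^n, τ ∈ ℝ, z ∈ ℂ with Im z ≠ 0, and G⁰ = (M⁰ − zI)^{-1}. Then | τ ((G⁰)² y, y) / (1 + τ (G⁰ y, y)) | ≤ 1/|Im z|. In particular, if M = M⁰ + τ y⊗y and G = (M−zI)^{-1}, then |Tr G − Tr G⁰| ≤ 1/|Im z|. -/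
open MeasureTheory ProbabilityTheory Filter Topology Matrix Asymptotics
open scoped BigOperators ENNReal NNReal Pointwise

noncomputable section

namespace TraceAux
variable {n : ℕ}

lemma mul_vecMulVec (M : Matrix (Fin n) (Fin n) ℂ) (a b : Fin n → ℂ) :
    M * Matrix.vecMulVec a b = Matrix.vecMulVec (M *ᵥ a) b := by
  ext i j
  simp only [Matrix.mul_apply, Matrix.vecMulVec_apply, Matrix.mulVec, dotProduct,
    Finset.sum_mul]
  exact Finset.sum_congr rfl fun k _ => by ring

lemma vecMulVec_mul_vecMulVec (a b c d : Fin n → ℂ) :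
    Matrix.vecMulVec a b * Matrix.vecMulVec c d = (b ⬝ᵥ c) • Matrix.vecMulVec a d := by
  ext i j
  simp only [Matrix.mul_apply, Matrix.vecMulVec_apply, Matrix.smul_apply, dotProduct,
    smul_eq_mul, Finset.sum_mul]
  exact Finset.sum_congr rfl fun k _ => by ring

lemma herm_form_real {A : Matrix (Fin n) (Fin n) ℂ} (hA : Aᴴ = A) (v : Fin n → ℂ) :
    (star v ⬝ᵥ (A *ᵥ v)).im = 0 := by
  rw [← Complex.conj_eq_iff_im]
  have h1 : (starRingEnd ℂ) (star v ⬝ᵥ (A *ᵥ v)) = star (A *ᵥ v) ⬝ᵥ v := by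
    rw [Matrix.star_dotProduct]; exact star_star _
  rw [h1, Matrix.star_mulVec, hA, ← Matrix.dotProduct_mulVec]

lemma self_dot_im (v : Fin n → ℂ) : (star v ⬝ᵥ v).im = 0 := by
  rw [dotProduct, Complex.im_sum]
  refine Finset.sum_eq_zero fun j _ => ?_
  simp [Complex.mul_im, Complex.star_def]
  ring

lemma self_dot_re (v : Fin n → ℂ) : (star v ⬝ᵥ v).re = ∑ j, Complex.normSq (v j) := by
  rw [dotProduct, Complex.re_sum]
  exact Finset.sum_congr rfl fun j _ => by
    simp [Complex.star_def, Complex.mul_re, Complex.normSq_apply]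

lemma self_dot_re_nonneg (v : Fin n → ℂ) : 0 ≤ (star v ⬝ᵥ v).re := by
  rw [self_dot_re]
  exact Finset.sum_nonneg fun j _ => Complex.normSq_nonneg _

lemma self_dot_re_eq_zero {v : Fin n → ℂ} (h : (star v ⬝ᵥ v).re = 0) : v = 0 := by
  rw [self_dot_re] at h
  funext j
  exact Complex.normSq_eq_zero.1
    ((Finset.sum_eq_zero_iff_of_nonneg fun j _ => Complex.normSq_nonneg (v j)).1 h j
      (Finset.mem_univ j))

lemma det_isUnit {A : Matrix (Fin n) (Fin n) ℂ} (hA : Aᴴ = A) {z : ℂ} (hz : z.im ≠ 0) :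
    IsUnit (A - z • 1).det := by
  rw [isUnit_iff_ne_zero]
  intro hdet
  obtain ⟨v, hv, hv0⟩ := Matrix.exists_mulVec_eq_zero_iff.2 hdet
  have hAv : A *ᵥ v = z • v := by
    have h := hv0
    rw [Matrix.sub_mulVec, sub_eq_zero, Matrix.smul_mulVec, Matrix.one_mulVec] at h
    exact h
  have hq : (star v ⬝ᵥ (A *ᵥ v)).im = 0 := herm_form_real hA v
  rw [hAv, dotProduct_smul, smul_eq_mul, Complex.mul_im, self_dot_im,
    mul_zero, zero_add] at hq
  have hre : (star v ⬝ᵥ v).re = 0 := by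
    rcases mul_eq_zero.1 hq with h | h
    · exact absurd h hz
    · exact h
  exact hv (self_dot_re_eq_zero hre)

end TraceAux

/-- the trace increment of a rank-one perturbation is bounded by `1/|Im z|`. -/
theorem trace_increment_bound {n : ℕ} (M0 : Matrix (Fin n) (Fin n) ℝ)
    (hM0 : M0.IsHermitian) (y : Fin n → ℝ) (τ : ℝ) (z : ℂ) (hz : z.im ≠ 0) :
    ‖(τ : ℂ) * quadForm (resolventM M0 z * resolventM M0 z) y /
        (1 + (τ : ℂ) * quadForm (resolventM M0 z) y)‖ ≤ 1 / |z.im| ∧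
    ‖(resolventM (M0 + τ • Matrix.vecMulVec y y) z).trace -
        (resolventM M0 z).trace‖ ≤ 1 / |z.im| := by
  set A : Matrix (Fin n) (Fin n) ℂ := M0.map (fun x => (x : ℂ)) with hAdef
  set u : Fin n → ℂ := fun j => ((y j : ℝ) : ℂ) with hudef
  set B : Matrix (Fin n) (Fin n) ℂ := A - z • 1 with hBdef
  have hAH : Aᴴ = A := by
    ext i j
    simp only [hAdef, Matrix.conjTranspose_apply, Matrix.map_apply, Complex.star_def,
      Complex.conj_ofReal]
    exact_mod_cast congrFun (congrFun hM0.eq i) j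
  have hAT : Aᵀ = A := by
    ext i j
    simp only [hAdef, Matrix.transpose_apply, Matrix.map_apply]
    have := congrFun (congrFun hM0.eq i) j
    simp only [Matrix.conjTranspose_apply, star_trivial] at this
    exact_mod_cast this
  have hdet : IsUnit B.det := TraceAux.det_isUnit hAH hz
  set G : Matrix (Fin n) (Fin n) ℂ := B⁻¹ with hGdef
  have hresG : resolventM M0 z = G := by rw [hGdef, hBdef, hAdef]; rfl
  have hBG : B * G = 1 := Matrix.mul_nonsing_inv B hdet
  have hGT : Gᵀ = G := by
    have hBT : Bᵀ = B := by
      rw [hBdef, Matrix.transpose_sub, hAT, Matrix.transpose_smul, Matrix.transpose_one]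
    rw [hGdef, Matrix.transpose_nonsing_inv, hBT]
  set w : Fin n → ℂ := G *ᵥ u with hwdef
  have hBw : B *ᵥ w = u := by
    rw [hwdef, Matrix.mulVec_mulVec, hBG, Matrix.one_mulVec]
  have hstaru : star u = u := by
    funext j; simp [hudef, Complex.star_def, Complex.conj_ofReal]
  have hquad : ∀ C : Matrix (Fin n) (Fin n) ℂ, quadForm C y = u ⬝ᵥ (C *ᵥ u) := by
    intro C
    simp only [quadForm, dotProduct, Matrix.mulVec, Finset.mul_sum, hudef]
    exact Finset.sum_congr rfl fun j _ => Finset.sum_congr rfl fun k _ => by ring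
  have hSdef : quadForm G y = u ⬝ᵥ w := by rw [hquad, hwdef]
  set S : ℂ := u ⬝ᵥ w with hS
  set sre : ℝ := (star w ⬝ᵥ w).re with hsre
  have hsre_nonneg : 0 ≤ sre := TraceAux.self_dot_re_nonneg w
  have hQ2 : quadForm (G * G) y = w ⬝ᵥ w := by
    rw [hquad]
    have h1 : (G * G) *ᵥ u = G *ᵥ w := by rw [hwdef, Matrix.mulVec_mulVec]
    have h2 : u ᵥ* G = w := by rw [← hGT, Matrix.vecMul_transpose, ← hwdef]
    rw [h1, Matrix.dotProduct_mulVec, h2]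
  have hSim : S.im = z.im * sre := by
    have hBH : Bᴴ = A - (starRingEnd ℂ) z • 1 := by
      rw [hBdef, Matrix.conjTranspose_sub, hAH, Matrix.conjTranspose_smul,
        Matrix.conjTranspose_one]
      rfl
    have e : S = star w ⬝ᵥ (A *ᵥ w) - (starRingEnd ℂ) z * (star w ⬝ᵥ w) := by
      rw [hS]
      conv_lhs => rw [← hstaru, ← hBw]
      rw [Matrix.star_mulVec, ← Matrix.dotProduct_mulVec, hBH, Matrix.sub_mulVec,
        Matrix.smul_mulVec, Matrix.one_mulVec, dotProduct_sub,
        dotProduct_smul, smul_eq_mul]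
    rw [e, Complex.sub_im, TraceAux.herm_form_real hAH w, Complex.mul_im,
      TraceAux.self_dot_im w, Complex.conj_im, Complex.conj_re, ← hsre]
    ring
  have habsQ2 : ‖w ⬝ᵥ w‖ ≤ sre := by
    rw [hsre, TraceAux.self_dot_re, dotProduct]
    refine le_trans (norm_sum_le _ _) (le_of_eq (Finset.sum_congr rfl fun j _ => ?_))
    rw [norm_mul, ← Complex.sq_norm, sq]
  have hzabs : 0 < |z.im| := abs_pos.2 hz
  -- Part 1 (with G)
  have key1 : ‖(τ : ℂ) * quadForm (G * G) y / (1 + (τ : ℂ) * quadForm G y)‖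
      ≤ 1 / |z.im| := by
    rcases eq_or_ne (1 + (τ : ℂ) * quadForm G y) 0 with hD | hD
    · rw [hD, div_zero, norm_zero]
      positivity
    · have hDim : (1 + (τ : ℂ) * quadForm G y).im = τ * (z.im * sre) := by
        rw [hSdef, Complex.add_im, Complex.one_im, zero_add, Complex.mul_im,
          Complex.ofReal_im, Complex.ofReal_re, zero_mul, add_zero, hSim]
      have hDlow : |τ| * (|z.im| * sre) ≤ ‖1 + (τ : ℂ) * quadForm G y‖ := by
        refine le_trans (le_of_eq ?_) (Complex.abs_im_le_norm _)
        rw [hDim, abs_mul, abs_mul, abs_of_nonneg hsre_nonneg]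
      have hDpos : 0 < ‖1 + (τ : ℂ) * quadForm G y‖ :=
        norm_pos_iff.mpr hD
      rw [norm_div, norm_mul, div_le_div_iff₀ hDpos hzabs, Complex.norm_real, Real.norm_eq_abs, hQ2]
      have h1 : |τ| * ‖w ⬝ᵥ w‖ * |z.im| ≤ |τ| * (|z.im| * sre) := by
        have := mul_le_mul_of_nonneg_left habsQ2 (abs_nonneg τ)
        nlinarith [abs_nonneg τ, hzabs.le]
      calc |τ| * ‖w ⬝ᵥ w‖ * |z.im| ≤ |τ| * (|z.im| * sre) := h1
        _ ≤ ‖1 + (τ : ℂ) * quadForm G y‖ := hDlow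
        _ = 1 * ‖1 + (τ : ℂ) * quadForm G y‖ := (one_mul _).symm
  refine ⟨by rw [hresG]; exact key1, ?_⟩
  -- Part 2
  by_cases hτ : τ = 0
  · subst hτ
    simp only [zero_smul, add_zero, sub_self, norm_zero]
    positivity
  by_cases hw0 : w = 0
  · have hu0 : u = 0 := by rw [← hBw, hw0, Matrix.mulVec_zero]
    have hy0 : y = 0 := by
      funext j
      have := congrFun hu0 j
      simpa [hudef] using this
    rw [hy0]
    have hvv : Matrix.vecMulVec (0 : Fin n → ℝ) (0 : Fin n → ℝ) = (0 : Matrix (Fin n) (Fin n) ℝ) := by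
      ext i j; simp [Matrix.vecMulVec_apply]
    rw [hvv, smul_zero, add_zero, sub_self, norm_zero]
    positivity
  -- nondegenerate case
  have hsre_pos : 0 < sre := by
    rcases lt_or_eq_of_le hsre_nonneg with h | h
    · exact h
    · exact absurd (TraceAux.self_dot_re_eq_zero (by rw [← hsre]; exact h.symm)) hw0
  have hD : (1 : ℂ) + (τ : ℂ) * S ≠ 0 := by
    intro h
    have : ((1 : ℂ) + (τ : ℂ) * S).im = 0 := by rw [h]; simp
    rw [Complex.add_im, Complex.one_im, zero_add, Complex.mul_im, Complex.ofReal_im,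
      Complex.ofReal_re, zero_mul, add_zero, hSim] at this
    have := mul_eq_zero.1 this
    rcases this with h' | h'
    · exact hτ h'
    · rcases mul_eq_zero.1 h' with h'' | h''
      · exact hz h''
      · exact (ne_of_gt hsre_pos) h''
  set P : Matrix (Fin n) (Fin n) ℂ := Matrix.vecMulVec u u with hPdef
  set c : ℂ := (τ : ℂ) / (1 + (τ : ℂ) * S) with hcdef
  have hGP : G * P = Matrix.vecMulVec w u := by
    rw [hPdef, TraceAux.mul_vecMulVec, ← hwdef]
  have hPGP : P * (G * P) = S • P := by
    rw [hGP, hPdef, TraceAux.vecMulVec_mul_vecMulVec, hS]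
  have e1 : B * (G * P * G) = P * G := by
    rw [← mul_assoc, ← mul_assoc, hBG, one_mul]
  have e2 : P * (G * P * G) = S • (P * G) := by
    calc P * (G * P * G) = P * (G * P) * G := (mul_assoc P (G * P) G).symm
      _ = (S • P) * G := by rw [hPGP]
      _ = S • (P * G) := Matrix.smul_mul S P G
  have hSM : (B + (τ : ℂ) • P) * (G - c • (G * P * G)) = 1 := by
    have hc : (τ : ℂ) - c - (τ : ℂ) * c * S = 0 := by
      rw [hcdef]
      field_simp
      ring
    calc (B + (τ : ℂ) • P) * (G - c • (G * P * G))
        = B * G - c • (B * (G * P * G)) + ((τ : ℂ) • (P * G)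
            - ((τ : ℂ) * c) • (P * (G * P * G))) := by
          simp only [add_mul, mul_sub, Matrix.smul_mul, Matrix.mul_smul, smul_smul,
            mul_comm c (τ : ℂ)]
          abel
      _ = 1 - c • (P * G) + ((τ : ℂ) • (P * G) - ((τ : ℂ) * c * S) • (P * G)) := by
          rw [hBG, e1, e2, smul_smul]
      _ = 1 + (((τ : ℂ) - c - (τ : ℂ) * c * S) • (P * G)) := by
          rw [sub_smul, sub_smul]
          abel
      _ = 1 := by rw [hc, zero_smul, add_zero]
  have hres2 : resolventM (M0 + τ • Matrix.vecMulVec y y) z = G - c • (G * P * G) := by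
    have hmap : (M0 + τ • Matrix.vecMulVec y y).map (fun x => (x : ℂ))
        = A + (τ : ℂ) • P := by
      ext i j
      simp only [Matrix.map_apply, Matrix.add_apply, Matrix.smul_apply,
        Matrix.vecMulVec_apply, hAdef, hPdef, hudef, smul_eq_mul]
      push_cast
      ring
    rw [resolventM, hmap]
    have harr : A + (τ : ℂ) • P - z • 1 = B + (τ : ℂ) • P := by
      rw [hBdef]; abel
    rw [harr]
    exact Matrix.inv_eq_right_inv hSM
  rw [hres2, hresG]
  have htr : (G - c • (G * P * G)).trace - G.trace = -(c * quadForm (G * G) y) := by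
    rw [Matrix.trace_sub, Matrix.trace_smul, smul_eq_mul]
    have htrP : (G * P * G).trace = quadForm (G * G) y := by
      rw [Matrix.trace_mul_cycle, hPdef, TraceAux.mul_vecMulVec (G * G) u u]
      rw [hquad]
      simp only [Matrix.trace, Matrix.diag_apply, Matrix.vecMulVec_apply]
      rw [dotProduct]
      exact Finset.sum_congr rfl fun j _ => by
        rw [mul_comm]
    rw [htrP]
    ring
  rw [htr, norm_neg]
  have hfin : c * quadForm (G * G) y
      = (τ : ℂ) * quadForm (G * G) y / (1 + (τ : ℂ) * quadForm G y) := by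
    rw [hSdef, hcdef, div_mul_eq_mul_div]
  rw [hfin]
  exact key1
end
end
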